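/- For every 3×3 matrix A with natural-number entries all of whose row sums and column sums equal 3, the pair of invariants (c₁, c₂) = (Tr(A), (1/2)·Tr(A² + A)) takes one of exactly the following 16 values: (9,18), (7,13), (5,12), (3,15), (6,9), (5,9), (4,7), (3,9), (2,9), (3,3), (3,6), (2,6), (1,4), (1,7), (0,0), (0,6); and two such matrices are permutation-conjugate if and only if they have the same pair of invariants. -/

import Mathlib

/-- The permutation matrix of a permutation `σ` (entries in `ℕ`). -/
def permMat {n : Type*} [DecidableEq n] (σ : Equiv.Perm n) : Matrix n n ℕ :=
  fun i j => if σ j = i then 1 else 0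

/-- Two square ℕ-valued matrices are permutation-conjugate if `T * A * T⁻¹ = B`
for some permutation matrix `T`, equivalently `T * A = B * T`. -/
def PermConj {n : Type*} [Fintype n] [DecidableEq n] (A B : Matrix n n ℕ) : Prop :=
  ∃ σ : Equiv.Perm n, permMat σ * A = B * permMat σ

lemma permMat_mul {n : Type*} [Fintype n] [DecidableEq n] (σ τ : Equiv.Perm n) :
    permMat σ * permMat τ = permMat (σ * τ) := by
  ext i j
  simp only [permMat, Matrix.mul_apply]
  rw [Finset.sum_eq_single (τ j)]
  · simp; split_ifs <;> simp_all [Equiv.Perm.mul_apply]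
  · intro k _ hk; simp [Ne.symm hk]
  · simp

lemma permMat_one {n : Type*} [Fintype n] [DecidableEq n] :
    permMat (1 : Equiv.Perm n) = 1 := by
  ext i j
  simp [permMat, Matrix.one_apply, eq_comm]

lemma permMat_inv_mul {n : Type*} [Fintype n] [DecidableEq n] (σ : Equiv.Perm n) :
    permMat σ⁻¹ * permMat σ = 1 := by
  rw [permMat_mul, inv_mul_cancel, permMat_one]

lemma permMat_mul_inv {n : Type*} [Fintype n] [DecidableEq n] (σ : Equiv.Perm n) :
    permMat σ * permMat σ⁻¹ = 1 := by
  rw [permMat_mul, mul_inv_cancel, permMat_one]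

lemma permConj_refl {n : Type*} [Fintype n] [DecidableEq n] (A : Matrix n n ℕ) :
    PermConj A A := ⟨1, by rw [permMat_one, one_mul, mul_one]⟩

lemma permConj_symm {n : Type*} [Fintype n] [DecidableEq n] {A B : Matrix n n ℕ}
    (h : PermConj A B) : PermConj B A := by
  obtain ⟨σ, hσ⟩ := h
  refine ⟨σ⁻¹, ?_⟩
  calc permMat σ⁻¹ * B = permMat σ⁻¹ * B * (permMat σ * permMat σ⁻¹) := by
        rw [permMat_mul_inv, mul_one]
    _ = permMat σ⁻¹ * (B * permMat σ) * permMat σ⁻¹ := by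
        simp only [Matrix.mul_assoc]
    _ = permMat σ⁻¹ * (permMat σ * A) * permMat σ⁻¹ := by rw [hσ]
    _ = A * permMat σ⁻¹ := by
        rw [← Matrix.mul_assoc, permMat_inv_mul, one_mul]

lemma permConj_trans {n : Type*} [Fintype n] [DecidableEq n] {A B C : Matrix n n ℕ}
    (h1 : PermConj A B) (h2 : PermConj B C) : PermConj A C := by
  obtain ⟨σ, hσ⟩ := h1
  obtain ⟨τ, hτ⟩ := h2
  refine ⟨τ * σ, ?_⟩
  rw [← permMat_mul, Matrix.mul_assoc, hσ, ← Matrix.mul_assoc, hτ, Matrix.mul_assoc]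

lemma permConj_trace {n : Type*} [Fintype n] [DecidableEq n] {A B : Matrix n n ℕ}
    (h : PermConj A B) :
    Matrix.trace A = Matrix.trace B ∧
      Matrix.trace (A ^ 2 + A) = Matrix.trace (B ^ 2 + B) := by
  obtain ⟨σ, hσ⟩ := h
  have hB : B = permMat σ * A * permMat σ⁻¹ := by
    rw [hσ, Matrix.mul_assoc, permMat_mul_inv, mul_one]
  have hB2 : B ^ 2 = permMat σ * A ^ 2 * permMat σ⁻¹ := by
    rw [hB, sq, sq]
    simp only [Matrix.mul_assoc]
    rw [← Matrix.mul_assoc (permMat σ⁻¹) (permMat σ), permMat_inv_mul, one_mul]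
  have t1 : Matrix.trace B = Matrix.trace A := by
    rw [hB, Matrix.trace_mul_comm, ← Matrix.mul_assoc, permMat_inv_mul, one_mul]
  have t2 : Matrix.trace (B ^ 2) = Matrix.trace (A ^ 2) := by
    rw [hB2, Matrix.trace_mul_comm, ← Matrix.mul_assoc, permMat_inv_mul, one_mul]
  refine ⟨t1.symm, ?_⟩
  simp [Matrix.trace_add, t1, t2]

def M4 (a b c d : Fin 4) : Matrix (Fin 3) (Fin 3) ℕ :=
  !![(a : ℕ), b, 3 - a - b; c, d, 3 - c - d;
     3 - a - c, 3 - b - d, a + b + c + d - 3]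

def rep : ℕ × ℕ → Matrix (Fin 3) (Fin 3) ℕ := fun p =>
  match p with
  | (9, 36) => !![3,0,0; 0,3,0; 0,0,3]
  | (7, 26) => !![2,0,1; 0,3,0; 1,0,2]
  | (5, 24) => !![1,0,2; 0,3,0; 2,0,1]
  | (3, 30) => !![0,0,3; 0,3,0; 3,0,0]
  | (6, 18) => !![2,0,1; 1,2,0; 0,1,2]
  | (5, 18) => !![1,1,1; 1,2,0; 1,0,2]
  | (4, 14) => !![1,0,2; 1,2,0; 1,1,1]
  | (3, 18) => !![0,1,2; 1,2,0; 2,0,1]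
  | (2, 18) => !![0,0,3; 1,2,0; 2,1,0]
  | (3, 6)  => !![1,0,2; 2,1,0; 0,2,1]
  | (3, 12) => !![1,1,1; 1,1,1; 1,1,1]
  | (2, 12) => !![0,1,2; 2,1,0; 1,1,1]
  | (1, 8)  => !![0,0,3; 2,1,0; 1,2,0]
  | (1, 14) => !![0,1,2; 1,1,1; 2,1,0]
  | (0, 0)  => !![0,0,3; 3,0,0; 0,3,0]
  | (0, 12) => !![0,1,2; 2,0,1; 1,2,0]
  | _ => 0

lemma recon (A : Matrix (Fin 3) (Fin 3) ℕ)
    (h : ∀ i, (∑ j, A i j = 3) ∧ (∑ j, A j i = 3)) :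
    ∃ a b c d : Fin 4, A = M4 a b c d := by
  have h0 := (h 0).1
  have h1 := (h 1).1
  have h2 := (h 2).1
  have v0 := (h 0).2
  have v1 := (h 1).2
  have v2 := (h 2).2
  rw [Fin.sum_univ_three] at h0 h1 h2 v0 v1 v2
  refine ⟨⟨A 0 0, by omega⟩, ⟨A 0 1, by omega⟩, ⟨A 1 0, by omega⟩, ⟨A 1 1, by omega⟩, ?_⟩
  ext i j
  fin_cases i <;> fin_cases j <;>
    simp [M4, Matrix.cons_val_zero, Matrix.cons_val_one, Matrix.head_cons] <;> omega

lemma core : ∀ a b c d : Fin 4,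
    (∀ i, (∑ j, M4 a b c d i j = 3) ∧ (∑ j, M4 a b c d j i = 3)) →
    ((Matrix.trace (M4 a b c d), Matrix.trace ((M4 a b c d) ^ 2 + M4 a b c d)) ∈
        ({(9, 2 * 18), (7, 2 * 13), (5, 2 * 12), (3, 2 * 15),
          (6, 2 * 9), (5, 2 * 9), (4, 2 * 7), (3, 2 * 9), (2, 2 * 9),
          (3, 2 * 3), (3, 2 * 6), (2, 2 * 6), (1, 2 * 4), (1, 2 * 7),
          (0, 2 * 0), (0, 2 * 6)} : Finset (ℕ × ℕ)) ∧
      ∃ σ : Equiv.Perm (Fin 3), permMat σ * M4 a b c d =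
        rep (Matrix.trace (M4 a b c d),
          Matrix.trace ((M4 a b c d) ^ 2 + M4 a b c d)) * permMat σ) := by
  decide

/-- for every 3×3 ℕ-matrix with all row and column sums equal to
3, the pair `(c₁, c₂) = (Tr A, ½·Tr(A² + A))` takes exactly one of the 16
listed values (recorded here via `Tr(A² + A) = 2·c₂`), and two such matrices
are permutation-conjugate iff they have the same pair of invariants. -/
theorem invariant_pairs_3x3 :
    (∀ A : Matrix (Fin 3) (Fin 3) ℕ,
      (∀ i, (∑ j, A i j = 3) ∧ (∑ j, A j i = 3)) →
      (Matrix.trace A, Matrix.trace (A ^ 2 + A)) ∈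
        ({(9, 2 * 18), (7, 2 * 13), (5, 2 * 12), (3, 2 * 15),
          (6, 2 * 9), (5, 2 * 9), (4, 2 * 7), (3, 2 * 9), (2, 2 * 9),
          (3, 2 * 3), (3, 2 * 6), (2, 2 * 6), (1, 2 * 4), (1, 2 * 7),
          (0, 2 * 0), (0, 2 * 6)} : Finset (ℕ × ℕ))) ∧
    (∀ A B : Matrix (Fin 3) (Fin 3) ℕ,
      (∀ i, (∑ j, A i j = 3) ∧ (∑ j, A j i = 3)) →
      (∀ i, (∑ j, B i j = 3) ∧ (∑ j, B j i = 3)) →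
      (PermConj A B ↔
        (Matrix.trace A = Matrix.trace B ∧
          Matrix.trace (A ^ 2 + A) = Matrix.trace (B ^ 2 + B)))) := by
  constructor
  · intro A hA
    obtain ⟨a, b, c, d, rfl⟩ := recon A hA
    exact (core a b c d hA).1
  · intro A B hA hB
    constructor
    · exact permConj_trace
    · rintro ⟨h1, h2⟩
      obtain ⟨a, b, c, d, rfl⟩ := recon A hA
      obtain ⟨a', b', c', d', rfl⟩ := recon B hB
      have cA : PermConj (M4 a b c d)
          (rep (Matrix.trace (M4 a b c d), Matrix.trace ((M4 a b c d) ^ 2 + M4 a b c d))) :=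
        (core a b c d hA).2
      have cB : PermConj (M4 a' b' c' d')
          (rep (Matrix.trace (M4 a' b' c' d'),
            Matrix.trace ((M4 a' b' c' d') ^ 2 + M4 a' b' c' d'))) :=
        (core a' b' c' d' hB).2
      rw [h1, h2] at cA
      exact permConj_trans cA (permConj_symm cB)
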